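/- Let G be a d-uniform hypergraph, P a perfect coloring of G in k colors with EX-parameter matrix W = (w_{γ,l}) and d-dimensional parameter matrix S, let n_l be the number of vertices of color l, and let m_γ be the number of hyperedges of color range γ. Then for every index γ = (γ₁,…,γ_d), the entry s_γ of S equals d · (m_γ / n_{γ₁}) · ( d! / (w_{γ,1}!⋯w_{γ,k}!) )^{-1}, where here γ is identified with the color range given by the multiset of its components. -/

import Mathlib

open Finset

/-- The product `A ∘ P` of a `(t+1)`-dimensional matrix `A` of order `n`
(presented with a distinguished first index and `t` further indices) with a
`2`-dimensional matrix `P`: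
`(A ∘ P)_{i,β} = ∑_{g : [t] → [n]} a_{i,g} ∏_j p_{g j, β j}`. -/
def mdMulMat {n k t : ℕ} (A : Fin n → (Fin t → Fin n) → ℝ)
    (P : Matrix (Fin n) (Fin k) ℝ) : Fin n → (Fin t → Fin k) → ℝ :=
  fun i β => ∑ g : Fin t → Fin n, A i g * ∏ j, P (g j) (β j)

/-- The product `P ∘ S` of a `2`-dimensional matrix `P` with a `(t+1)`-dimensional
matrix `S`: `(P ∘ S)_{i,β} = ∑_c p_{i,c} s_{c,β}`. -/
def matMulMd {n k t : ℕ} (P : Matrix (Fin n) (Fin k) ℝ)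
    (S : Fin k → (Fin t → Fin k) → ℝ) : Fin n → (Fin t → Fin k) → ℝ :=
  fun i β => ∑ c : Fin k, P i c * S c β

/-- The product `A ∘ x` of a `(t+1)`-dimensional matrix with a vector:
`(A ∘ x)_i = ∑_{i₂,…,i_d} a_{i,i₂,…,i_d} x_{i₂} ⋯ x_{i_d}`. -/
def mdMulVec {n t : ℕ} (A : Fin n → (Fin t → Fin n) → ℝ) (x : Fin n → ℝ) :
    Fin n → ℝ :=
  fun i => ∑ g : Fin t → Fin n, A i g * ∏ j, x (g j)

/-- The color matrix of a coloring `f`. -/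
def colorMatrix {n k : ℕ} (f : Fin n → Fin k) : Matrix (Fin n) (Fin k) ℝ :=
  Matrix.of fun x i => if f x = i then 1 else 0

/-- The `(t+1)`-dimensional adjacency matrix of a `(t+1)`-uniform hypergraph on `n`
vertices: the entry at `α` is `1/t!` if the components of `α` are `t+1` distinct
vertices forming a hyperedge, and `0` otherwise. -/
noncomputable def adjMatrix (t : ℕ) {n : ℕ} (edges : Finset (Finset (Fin n))) :
    Fin n → (Fin t → Fin n) → ℝ :=
  fun i g =>
    if Function.Injective (Fin.cons i g : Fin (t + 1) → Fin n)
        ∧ Finset.univ.image (Fin.cons i g) ∈ edges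
    then ((t.factorial : ℝ))⁻¹ else 0

/-- The multiset of color ranges of the hyperedges incident to the vertex `x`. -/
def incidentRanges {n k : ℕ} (edges : Finset (Finset (Fin n))) (f : Fin n → Fin k)
    (x : Fin n) : Multiset (Multiset (Fin k)) :=
  (edges.filter fun e => x ∈ e).val.map fun e => e.val.map f

/-- A coloring is perfect if any two vertices of the same color have the same
multiset of color ranges of their incident hyperedges. -/
def IsPerfect {n k : ℕ} (edges : Finset (Finset (Fin n))) (f : Fin n → Fin k) : Prop :=
  ∀ x y, f x = f y → incidentRanges edges f x = incidentRanges edges f y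

-- Auxiliary lemmas
noncomputable def fiberEquivEquiv {α α' κ : Type*} (f : α → κ) (β : α' → κ) :
    {σ : α' ≃ α // ∀ x, f (σ x) = β x} ≃ (∀ l : κ, {x // β x = l} ≃ {y // f y = l}) where
  toFun σ l :=
    { toFun := fun x => ⟨σ.1 x.1, by rw [σ.2]; exact x.2⟩
      invFun := fun y => ⟨σ.1.symm y.1, by
        have h := σ.2 (σ.1.symm y.1); rw [Equiv.apply_symm_apply] at h; rw [← h]; exact y.2⟩
      left_inv := fun x => by ext; simp
      right_inv := fun y => by ext; simp }
  invFun F := ⟨Equiv.ofFiberEquiv (f := β) (g := f) F, fun x => Equiv.ofFiberEquiv_map F x⟩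
  left_inv := fun σ => by
    ext x
    simp [Equiv.ofFiberEquiv]
  right_inv := fun F => by
    funext l
    ext ⟨x, hx⟩
    subst hx
    simp [Equiv.ofFiberEquiv, Equiv.sigmaFiberEquiv]

lemma card_equiv_fiber {α α' κ : Type*} [Finite α] [Finite α'] [Fintype κ]
    (f : α → κ) (β : α' → κ)
    (h : ∀ l, Nat.card {x // β x = l} = Nat.card {y // f y = l}) :
    Nat.card {σ : α' ≃ α // ∀ x, f (σ x) = β x}
      = ∏ l : κ, (Nat.card {x : α' // β x = l}).factorial := by
  classical
  rw [Nat.card_congr (fiberEquivEquiv f β), Nat.card_pi]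
  refine Finset.prod_congr rfl fun l _ => ?_
  have := Fintype.ofFinite α
  have := Fintype.ofFinite α'
  have hl := h l
  rw [Nat.card_eq_fintype_card, Nat.card_eq_fintype_card] at hl
  rw [Nat.card_eq_fintype_card, Nat.card_eq_fintype_card,
    Fintype.card_equiv (Fintype.equivOfCardEq hl)]

lemma count_fiber_nat {t k : ℕ} (β : Fin t → Fin k) (l : Fin k) :
    (Multiset.map β (Finset.univ : Finset (Fin t)).val).count l
      = Nat.card {x : Fin t // β x = l} := by
  classical
  rw [Nat.card_eq_fintype_card, Fintype.card_subtype, Multiset.count_map,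
    Finset.card_def, Finset.filter_val]
  exact congrArg Multiset.card (Multiset.filter_congr fun x _ => eq_comm)

lemma count_fiber_finset {n k : ℕ} (f : Fin n → Fin k) (e : Finset (Fin n)) (l : Fin k) :
    (Multiset.map f e.val).count l = Nat.card {y : ↥e // f ↑y = l} := by
  classical
  have e1 : Nat.card {y : ↥e // f ↑y = l} = Nat.card {y : Fin n // y ∈ e ∧ f y = l} :=
    Nat.card_congr (Equiv.subtypeSubtypeEquivSubtypeInter (fun y : Fin n => y ∈ e)
      (fun y => f y = l))
  have e2 : (Finset.univ.filter fun y : Fin n => y ∈ e ∧ f y = l)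
      = e.filter fun y => f y = l := by ext y; simp
  rw [e1, Nat.card_eq_fintype_card, Fintype.card_subtype, e2, Multiset.count_map,
    Finset.card_def, Finset.filter_val]
  exact congrArg Multiset.card (Multiset.filter_congr fun x _ => eq_comm)

set_option maxHeartbeats 1000000 in
open scoped Classical in
lemma core_count {n k t : ℕ} (f : Fin n → Fin k) (β : Fin (t+1) → Fin k) (e : Finset (Fin n))
    (hcard : e.card = t + 1) (hmap : Multiset.map f e.val = Multiset.map β Finset.univ.val) :
    (Finset.univ.filter fun h : Fin (t+1) → Fin n =>
        Function.Injective h ∧ Finset.univ.image h = e ∧ f ∘ h = β).card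
      = ∏ l : Fin k, ((Multiset.map β Finset.univ.val).count l).factorial := by
  have hfib : ∀ l : Fin k, Nat.card {x : Fin (t+1) // β x = l}
      = Nat.card {y : ↥e // f ↑y = l} := fun l => by
    rw [← count_fiber_nat, ← count_fiber_finset, hmap]
  have hcard' : Fintype.card ↥e = Fintype.card (Fin (t+1)) := by
    simp [Fintype.card_coe, hcard]
  have hbij : ∀ (h : {h : Fin (t+1) → Fin n //
        Function.Injective h ∧ Finset.univ.image h = e ∧ f ∘ h = β}) (x : Fin (t+1)),
      h.1 x ∈ e := fun h x => by
    have hx := Finset.mem_image_of_mem h.1 (Finset.mem_univ x)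
    rwa [h.2.2.1] at hx
  have hΨ : {h : Fin (t+1) → Fin n //
        Function.Injective h ∧ Finset.univ.image h = e ∧ f ∘ h = β}
      ≃ {σ : Fin (t+1) ≃ ↥e // ∀ x, f ↑(σ x) = β x} := by
    refine
      { toFun := fun h => ⟨Equiv.ofBijective (fun x => (⟨h.1 x, hbij h x⟩ : ↥e)) ?_,
          fun x => congrFun h.2.2.2 x⟩
        invFun := fun σ => ⟨fun x => ↑(σ.1 x), ?_, ?_, funext fun x => σ.2 x⟩
        left_inv := fun h => Subtype.ext rfl
        right_inv := fun σ => Subtype.ext (Equiv.ext fun x => Subtype.ext rfl) }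
    · exact (Fintype.bijective_iff_injective_and_card _).2
        ⟨fun a b hab => h.2.1 (congrArg Subtype.val hab), hcard'.symm⟩
    · exact fun a b hab => σ.1.injective (Subtype.ext hab)
    · ext y
      simp only [Finset.mem_image]
      constructor
      · rintro ⟨x, -, rfl⟩; exact (σ.1 x).2
      · intro hy; exact ⟨σ.1.symm ⟨y, hy⟩, Finset.mem_univ _, by simp⟩
  have h1 : (Finset.univ.filter fun h : Fin (t+1) → Fin n =>
        Function.Injective h ∧ Finset.univ.image h = e ∧ f ∘ h = β).card
      = Nat.card {h : Fin (t+1) → Fin n //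
          Function.Injective h ∧ Finset.univ.image h = e ∧ f ∘ h = β} := by
    rw [Nat.card_eq_fintype_card, Fintype.card_subtype]
  rw [h1, Nat.card_congr hΨ, card_equiv_fiber (fun y : ↥e => f ↑y) β hfib]
  exact Finset.prod_congr rfl fun l _ => by rw [count_fiber_nat]

lemma map_cons_univ {t : ℕ} {κ : Type*} (c : κ) (γ : Fin t → κ) :
    Multiset.map (Fin.cons c γ) (Finset.univ : Finset (Fin (t+1))).val
      = c ::ₘ Multiset.map γ Finset.univ.val := by
  rw [Fin.univ_succ, Finset.cons_val, Multiset.map_cons, Fin.cons_zero, Finset.map_val,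
    Multiset.map_map]
  exact congrArg (c ::ₘ ·) (Multiset.map_congr rfl fun x _ => by simp)

lemma image_val_map {n t : ℕ} (h : Fin t → Fin n) (hinj : Function.Injective h) :
    (Finset.univ.image h).val = Multiset.map h Finset.univ.val := by
  rw [Finset.image_val, Multiset.dedup_eq_self.2 (Multiset.Nodup.map hinj Finset.univ.nodup)]

open scoped Classical in
lemma count_T {n k t : ℕ} (edges : Finset (Finset (Fin n))) (huni : ∀ e ∈ edges, e.card = t+1)
    (f : Fin n → Fin k) (β : Fin (t+1) → Fin k) :
    (Finset.univ.filter fun h : Fin (t+1) → Fin n =>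
        Function.Injective h ∧ Finset.univ.image h ∈ edges ∧ f ∘ h = β).card
      = (edges.filter fun e => Multiset.map f e.val = Multiset.map β Finset.univ.val).card
          * ∏ l : Fin k, ((Multiset.map β Finset.univ.val).count l).factorial := by
  rw [Finset.card_eq_sum_card_fiberwise (f := fun h : Fin (t+1) → Fin n => Finset.univ.image h)
    (t := edges.filter fun e => Multiset.map f e.val = Multiset.map β Finset.univ.val) ?_]
  · rw [Finset.sum_congr rfl fun e he => ?_, Finset.sum_const, smul_eq_mul]
    have hee : e ∈ edges := (Finset.mem_filter.1 he).1
    have hm : Multiset.map f e.val = Multiset.map β Finset.univ.val :=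
      (Finset.mem_filter.1 he).2
    have hset : ((Finset.univ.filter fun h : Fin (t+1) → Fin n =>
          Function.Injective h ∧ Finset.univ.image h ∈ edges ∧ f ∘ h = β).filter
            fun h => Finset.univ.image h = e)
        = Finset.univ.filter fun h : Fin (t+1) → Fin n =>
            Function.Injective h ∧ Finset.univ.image h = e ∧ f ∘ h = β := by
      ext h
      simp only [Finset.mem_filter, Finset.mem_univ, true_and]
      constructor
      · rintro ⟨⟨h1, h2, h3⟩, h4⟩; exact ⟨h1, h4, h3⟩
      · rintro ⟨h1, h2, h3⟩; exact ⟨⟨h1, h2 ▸ hee, h3⟩, h2⟩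
    rw [hset, core_count f β e (huni e hee) hm]
  · intro h hh
    rw [Finset.mem_coe, Finset.mem_filter] at hh ⊢
    obtain ⟨-, hinj, hmem, hcomp⟩ := hh
    refine ⟨hmem, ?_⟩
    rw [image_val_map h hinj, Multiset.map_map, hcomp]

lemma sum_cons_eq {n t : ℕ} (FF : (Fin (t+1) → Fin n) → ℝ) :
    (∑ x : Fin n, ∑ g : Fin t → Fin n, FF (Fin.cons x g)) = ∑ h, FF h := by
  have h2 := Fintype.sum_prod_type (f := fun p : Fin n × (Fin t → Fin n) => FF (Fin.cons p.1 p.2))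
  exact h2.symm.trans (Fintype.sum_equiv (Fin.consEquiv fun _ => Fin n) _ _ fun p => rfl)

/-- Corollary (parammultii2).  Let `P` be a perfect coloring of a `(t+1)`-uniform
hypergraph with parameter matrix `S`; let `n_l` be the number of vertices of color `l`
and `m_γ` the number of hyperedges of color range `γ`.  Then for every index
`γ = (γ₁,…,γ_d)` (identified with the multiset of its components),
`s_γ = d · (m_γ / n_{γ₁}) · (w_{γ,1}! ⋯ w_{γ,k}!) / d!`, where `w_{γ,l}` is the number
of occurrences of the color `l` in the color range `γ` (the entries of the
EX-parameter matrix `W`). -/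
theorem stmt6 {n k t : ℕ}
    (edges : Finset (Finset (Fin n))) (huni : ∀ e ∈ edges, e.card = t + 1)
    (f : Fin n → Fin k) (hf : Function.Surjective f)
    (hperf : IsPerfect edges f)
    (S : Fin k → (Fin t → Fin k) → ℝ)
    (hS : mdMulMat (adjMatrix t edges) (colorMatrix f) = matMulMd (colorMatrix f) S) :
    ∀ (c : Fin k) (γ : Fin t → Fin k),
      S c γ
        = ((t : ℝ) + 1)
            * ((edges.filter fun e =>
                  e.val.map f = c ::ₘ Multiset.map γ Finset.univ.val).card : ℝ)
            / ((Finset.univ.filter fun x => f x = c).card : ℝ)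
            * ((∏ l : Fin k,
                  ((c ::ₘ Multiset.map γ Finset.univ.val).count l).factorial : ℕ) : ℝ)
            / ((t + 1).factorial : ℝ) := by
  classical
  intro c γ
  set β : Fin (t + 1) → Fin k := Fin.cons c γ with hβ
  set Fc := Finset.univ.filter fun x => f x = c with hFc
  set T := Finset.univ.filter fun h : Fin (t+1) → Fin n =>
    Function.Injective h ∧ Finset.univ.image h ∈ edges ∧ f ∘ h = β with hT
  have hSx : ∀ x : Fin n,
      (∑ g : Fin t → Fin n, adjMatrix t edges x g * ∏ j, colorMatrix f (g j) (γ j))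
        = S (f x) γ := by
    intro x
    have h := congrFun (congrFun hS x) γ
    rw [mdMulMat, matMulMd] at h
    simp only [colorMatrix, Matrix.of_apply, ite_mul, one_mul, zero_mul,
      Finset.sum_ite_eq, Finset.mem_univ, if_true] at h
    rw [← h]
    simp only [colorMatrix, Matrix.of_apply]
  have hcons : ∀ (x : Fin n) (g : Fin t → Fin n),
      (f ∘ Fin.cons x g = β) ↔ (f x = c ∧ ∀ j, f (g j) = γ j) := by
    intro x g
    rw [hβ, Fin.comp_cons, Fin.cons_inj]
    exact and_congr_right fun _ => funext_iff
  have hterm : ∀ (x : Fin n) (g : Fin t → Fin n),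
      (if f x = c then adjMatrix t edges x g * ∏ j, colorMatrix f (g j) (γ j) else 0)
        = if (Function.Injective (Fin.cons x g : Fin (t+1) → Fin n)
            ∧ Finset.univ.image (Fin.cons x g) ∈ edges ∧ f ∘ Fin.cons x g = β)
          then ((t.factorial : ℝ))⁻¹ else 0 := by
    intro x g
    simp only [adjMatrix, colorMatrix, Matrix.of_apply, Finset.prod_boole, Finset.mem_univ,
      forall_const, hcons x g]
    split_ifs <;> simp_all
  have hkey : (Fc.card : ℝ) * S c γ = ((t.factorial : ℝ))⁻¹ * (T.card : ℝ) := by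
    calc (Fc.card : ℝ) * S c γ = ∑ _x ∈ Fc, S c γ := by
          rw [Finset.sum_const, nsmul_eq_mul]
      _ = ∑ x ∈ Fc, ∑ g : Fin t → Fin n,
            adjMatrix t edges x g * ∏ j, colorMatrix f (g j) (γ j) := by
          refine Finset.sum_congr rfl fun x hx => ?_
          rw [hSx x, (Finset.mem_filter.1 hx).2]
      _ = ∑ x : Fin n, if f x = c then (∑ g : Fin t → Fin n,
            adjMatrix t edges x g * ∏ j, colorMatrix f (g j) (γ j)) else 0 :=
          Finset.sum_filter _ _
      _ = ∑ x : Fin n, ∑ g : Fin t → Fin n,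
            (if f x = c then adjMatrix t edges x g * ∏ j, colorMatrix f (g j) (γ j) else 0) := by
          refine Finset.sum_congr rfl fun x _ => ?_
          split_ifs with h
          · rfl
          · simp
      _ = ∑ x : Fin n, ∑ g : Fin t → Fin n,
            (if (Function.Injective (Fin.cons x g : Fin (t+1) → Fin n)
                ∧ Finset.univ.image (Fin.cons x g) ∈ edges ∧ f ∘ Fin.cons x g = β)
              then ((t.factorial : ℝ))⁻¹ else 0) :=
          Finset.sum_congr rfl fun x _ => Finset.sum_congr rfl fun g _ => hterm x g
      _ = ∑ h : Fin (t+1) → Fin n,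
            (if (Function.Injective h ∧ Finset.univ.image h ∈ edges ∧ f ∘ h = β)
              then ((t.factorial : ℝ))⁻¹ else 0) := by
          exact sum_cons_eq fun h =>
            if (Function.Injective h ∧ Finset.univ.image h ∈ edges ∧ f ∘ h = β)
              then ((t.factorial : ℝ))⁻¹ else 0
      _ = ((t.factorial : ℝ))⁻¹ * (T.card : ℝ) := by
          rw [← Finset.sum_filter, ← hT, Finset.sum_const, nsmul_eq_mul, mul_comm]
  have hTcard : T.card = (edges.filter fun e =>
        e.val.map f = c ::ₘ Multiset.map γ Finset.univ.val).card
      * ∏ l : Fin k, ((c ::ₘ Multiset.map γ Finset.univ.val).count l).factorial := by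
    rw [hT, count_T edges huni f β, hβ, map_cons_univ]
  have hNc : (Fc.card : ℝ) ≠ 0 := by
    obtain ⟨x, hx⟩ := hf c
    have : x ∈ Fc := Finset.mem_filter.2 ⟨Finset.mem_univ x, hx⟩
    exact Nat.cast_ne_zero.2 (Finset.card_pos.2 ⟨x, this⟩).ne'
  have hfac : ((t.factorial : ℝ)) ≠ 0 := Nat.cast_ne_zero.2 t.factorial_ne_zero
  rw [hTcard] at hkey
  rw [Nat.factorial_succ]
  push_cast at hkey ⊢
  field_simp at hkey ⊢
  linear_combination hkey
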